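/- Letained {A_q}_{q∈Q} be a finite family of n×n real matrices and suppose there exists a symmetric positive definite P with P − Σ_{q∈Q} A_qᵀPA_q positive definite. Then for every symmetric positive semidefinite G, the equation P' = Σ_{q∈Q} A_qᵀP'A_q + G has a unique solution, it is positive semidefinite, and equals Σ over all finite words w ∈ Q* of A_wᵀ G A_w, where A_w = A_{w_k}···A_{w_1} for w = w_1···w_k and A_ε = I. Moreover if G is positive definite then so is the solution. -/

import Mathlib

open Matrix

/-- For a word `w = w₁⋯w_k` (a list), `wordProd A w = A_{w_k} ⋯ A_{w_1}`,
with the empty word mapping to the identity. -/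
def wordProd {n : ℕ} {Q : Type*} (A : Q → Matrix (Fin n) (Fin n) ℝ)
    (w : List Q) : Matrix (Fin n) (Fin n) ℝ :=
  w.foldl (fun M q => A q * M) 1

namespace Stmt10Aux

set_option linter.unusedSectionVars false

variable {n : ℕ} {Q : Type*}

/-! ### Basic facts about quadratic forms and positive semidefinite matrices -/

lemma quad_cont (M : Matrix (Fin n) (Fin n) ℝ) :
    Continuous fun x : Fin n → ℝ => x ⬝ᵥ M *ᵥ x :=
  continuous_id.dotProduct (continuous_const.matrix_mulVec continuous_id)

lemma quad_smul (M : Matrix (Fin n) (Fin n) ℝ) (c : ℝ) (x : Fin n → ℝ) :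
    (c • x) ⬝ᵥ M *ᵥ (c • x) = c ^ 2 * (x ⬝ᵥ M *ᵥ x) := by
  rw [Matrix.mulVec_smul, dotProduct_smul, smul_dotProduct]
  simp [smul_eq_mul]; ring

lemma psd_quad {M : Matrix (Fin n) (Fin n) ℝ} (hM : M.PosSemidef) (x : Fin n → ℝ) :
    0 ≤ x ⬝ᵥ M *ᵥ x := by simpa using hM.dotProduct_mulVec_nonneg x

lemma pd_quad {M : Matrix (Fin n) (Fin n) ℝ} (hM : M.PosDef) {x : Fin n → ℝ} (hx : x ≠ 0) :
    0 < x ⬝ᵥ M *ᵥ x := by simpa using hM.dotProduct_mulVec_pos hx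

lemma posSemidef_sum {ι : Type*} (s : Finset ι) (f : ι → Matrix (Fin n) (Fin n) ℝ)
    (h : ∀ i ∈ s, (f i).PosSemidef) : (∑ i ∈ s, f i).PosSemidef := by
  classical
  induction s using Finset.induction with
  | empty => simpa using Matrix.PosSemidef.zero
  | insert _ _ hx ih =>
    rw [Finset.sum_insert hx]
    exact (h _ (Finset.mem_insert_self _ _)).add (ih fun i hi => h i (Finset.mem_insert_of_mem hi))

lemma psd_conj {X : Matrix (Fin n) (Fin n) ℝ} (hX : X.PosSemidef)
    (B : Matrix (Fin n) (Fin n) ℝ) : (Bᵀ * X * B).PosSemidef := by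
  rw [← conjTranspose_eq_transpose_of_trivial]
  exact hX.conjTranspose_mul_mul_same B

lemma psd_smul {X : Matrix (Fin n) (Fin n) ℝ} (hX : X.PosSemidef) {c : ℝ} (hc : 0 ≤ c) :
    (c • X).PosSemidef := by
  refine Matrix.PosSemidef.of_dotProduct_mulVec_nonneg ?_ fun x => ?_
  · unfold Matrix.IsHermitian
    rw [conjTranspose_smul, hX.1]
    simp
  · rw [Matrix.smul_mulVec, dotProduct_smul, smul_eq_mul]
    exact mul_nonneg hc (hX.dotProduct_mulVec_nonneg x)

/-! ### The ratio lemmas (via compactness of the sphere) -/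

lemma exists_ratio {P M : Matrix (Fin n) (Fin n) ℝ} (hP : P.PosDef) (hM : M.PosDef) :
    ∃ c : ℝ, 0 < c ∧ ∀ x : Fin n → ℝ, c * (x ⬝ᵥ P *ᵥ x) ≤ x ⬝ᵥ M *ᵥ x := by
  rcases Nat.eq_zero_or_pos n with hn | hn
  · refine ⟨1, one_pos, fun x => ?_⟩
    subst hn
    have hx : x = 0 := Subsingleton.elim _ _
    simp [hx]
  · have hne : (Metric.sphere (0 : Fin n → ℝ) 1).Nonempty := by
      haveI : Nonempty (Fin n) := ⟨⟨0, hn⟩⟩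
      rw [NormedSpace.sphere_nonempty]; norm_num
    obtain ⟨u, huS, hu⟩ := (isCompact_sphere (0 : Fin n → ℝ) 1).exists_isMinOn hne
      (quad_cont M).continuousOn
    obtain ⟨v, hvS, hv⟩ := (isCompact_sphere (0 : Fin n → ℝ) 1).exists_isMaxOn hne
      (quad_cont P).continuousOn
    have hunorm : ‖u‖ = 1 := by simpa using Metric.mem_sphere.mp huS
    have hune : u ≠ 0 := by intro h; rw [h] at hunorm; simp at hunorm
    have hm : 0 < u ⬝ᵥ M *ᵥ u := pd_quad hM hune
    have hvnorm : ‖v‖ = 1 := by simpa using Metric.mem_sphere.mp hvS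
    have hvne : v ≠ 0 := by intro h; rw [h] at hvnorm; simp at hvnorm
    have hCp : 0 < v ⬝ᵥ P *ᵥ v := pd_quad hP hvne
    refine ⟨(u ⬝ᵥ M *ᵥ u) / (v ⬝ᵥ P *ᵥ v), div_pos hm hCp, fun x => ?_⟩
    rcases eq_or_ne x 0 with rfl | hx
    · simp
    · set w : Fin n → ℝ := ‖x‖⁻¹ • x with hw
      have hxnorm : ‖x‖ ≠ 0 := norm_ne_zero_iff.mpr hx
      have hwS : w ∈ Metric.sphere (0 : Fin n → ℝ) 1 := by
        simp [hw, norm_smul, abs_of_nonneg (inv_nonneg.mpr (norm_nonneg x)),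
          inv_mul_cancel₀ hxnorm]
      set nx := ‖x‖ with hnx
      have hxw : x = nx • w := by
        rw [hnx, hw, smul_smul, mul_inv_cancel₀ hxnorm, one_smul]
      have h1 : x ⬝ᵥ M *ᵥ x = nx ^ 2 * (w ⬝ᵥ M *ᵥ w) := by rw [hxw, quad_smul]
      have h2 : x ⬝ᵥ P *ᵥ x = nx ^ 2 * (w ⬝ᵥ P *ᵥ w) := by rw [hxw, quad_smul]
      rw [h1, h2]
      have hMw : u ⬝ᵥ M *ᵥ u ≤ w ⬝ᵥ M *ᵥ w := hu hwS
      have hPw : w ⬝ᵥ P *ᵥ w ≤ v ⬝ᵥ P *ᵥ v := hv hwS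
      have hPw0 : 0 ≤ w ⬝ᵥ P *ᵥ w := psd_quad hP.posSemidef w
      have key : (u ⬝ᵥ M *ᵥ u) / (v ⬝ᵥ P *ᵥ v) * (w ⬝ᵥ P *ᵥ w) ≤ w ⬝ᵥ M *ᵥ w := by
        calc (u ⬝ᵥ M *ᵥ u) / (v ⬝ᵥ P *ᵥ v) * (w ⬝ᵥ P *ᵥ w)
            ≤ (u ⬝ᵥ M *ᵥ u) / (v ⬝ᵥ P *ᵥ v) * (v ⬝ᵥ P *ᵥ v) := by
              apply mul_le_mul_of_nonneg_left hPw (le_of_lt (div_pos hm hCp))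
          _ = u ⬝ᵥ M *ᵥ u := div_mul_cancel₀ _ (ne_of_gt hCp)
          _ ≤ w ⬝ᵥ M *ᵥ w := hMw
      calc (u ⬝ᵥ M *ᵥ u) / (v ⬝ᵥ P *ᵥ v) * (nx ^ 2 * (w ⬝ᵥ P *ᵥ w))
          = nx ^ 2 * ((u ⬝ᵥ M *ᵥ u) / (v ⬝ᵥ P *ᵥ v) * (w ⬝ᵥ P *ᵥ w)) := by ring
        _ ≤ nx ^ 2 * (w ⬝ᵥ M *ᵥ w) := by
            apply mul_le_mul_of_nonneg_left key (by positivity)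

lemma exists_ratio' {P X : Matrix (Fin n) (Fin n) ℝ} (hP : P.PosDef) (hX : X.PosSemidef) :
    ∃ c : ℝ, 0 < c ∧ ∀ x : Fin n → ℝ, x ⬝ᵥ X *ᵥ x ≤ c * (x ⬝ᵥ P *ᵥ x) := by
  obtain ⟨c, hc, h⟩ := exists_ratio (Matrix.PosDef.posSemidef_add hX hP) hP
  refine ⟨c⁻¹, inv_pos.mpr hc, fun x => ?_⟩
  have h1 := h x
  rw [Matrix.add_mulVec, dotProduct_add, mul_add] at h1
  have h2 : c * (x ⬝ᵥ X *ᵥ x) ≤ x ⬝ᵥ P *ᵥ x := by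
    nlinarith [mul_nonneg hc.le (psd_quad hP.posSemidef x)]
  calc x ⬝ᵥ X *ᵥ x = c⁻¹ * (c * (x ⬝ᵥ X *ᵥ x)) := by
        field_simp
    _ ≤ c⁻¹ * (x ⬝ᵥ P *ᵥ x) := mul_le_mul_of_nonneg_left h2 (inv_pos.mpr hc).le

lemma exists_sub_smul_psd {P M : Matrix (Fin n) (Fin n) ℝ} (hP : P.PosDef) (hM : M.PosDef) :
    ∃ c : ℝ, 0 < c ∧ (M - c • P).PosSemidef := by
  obtain ⟨c, hc, h⟩ := exists_ratio hP hM
  refine ⟨c, hc, Matrix.PosSemidef.of_dotProduct_mulVec_nonneg ?_ fun x => ?_⟩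
  · unfold Matrix.IsHermitian
    rw [conjTranspose_sub, conjTranspose_smul, hP.1, hM.1]; simp
  · rw [Matrix.sub_mulVec, dotProduct_sub, Matrix.smul_mulVec, dotProduct_smul]
    simp only [star_trivial, smul_eq_mul]
    linarith [h x]

lemma exists_smul_sub_psd {P X : Matrix (Fin n) (Fin n) ℝ} (hP : P.PosDef) (hX : X.PosSemidef) :
    ∃ c : ℝ, 0 < c ∧ (c • P - X).PosSemidef := by
  obtain ⟨c, hc, h⟩ := exists_ratio' hP hX
  refine ⟨c, hc, Matrix.PosSemidef.of_dotProduct_mulVec_nonneg ?_ fun x => ?_⟩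
  · unfold Matrix.IsHermitian
    rw [conjTranspose_sub, conjTranspose_smul, hP.1, hX.1]; simp
  · rw [Matrix.sub_mulVec, dotProduct_sub, Matrix.smul_mulVec, dotProduct_smul]
    simp only [star_trivial, smul_eq_mul]
    linarith [h x]

/-! ### The Lyapunov operator -/

variable [Fintype Q]

/-- The Lyapunov operator as a linear map. -/
def TL (A : Q → Matrix (Fin n) (Fin n) ℝ) :
    Matrix (Fin n) (Fin n) ℝ →ₗ[ℝ] Matrix (Fin n) (Fin n) ℝ where
  toFun X := ∑ q : Q, (A q)ᵀ * X * A q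
  map_add' X Y := by simp [mul_add, add_mul, Finset.sum_add_distrib]
  map_smul' c X := by simp [mul_smul_comm, smul_mul_assoc, Finset.smul_sum]

lemma TL_apply (A : Q → Matrix (Fin n) (Fin n) ℝ) (X) :
    TL A X = ∑ q : Q, (A q)ᵀ * X * A q := rfl

lemma TL_psd (A : Q → Matrix (Fin n) (Fin n) ℝ) {X} (hX : X.PosSemidef) :
    (TL A X).PosSemidef :=
  posSemidef_sum _ _ fun q _ => psd_conj hX (A q)

lemma TL_mono (A : Q → Matrix (Fin n) (Fin n) ℝ) {X Y : Matrix (Fin n) (Fin n) ℝ}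
    (h : (Y - X).PosSemidef) : (TL A Y - TL A X).PosSemidef := by
  rw [← map_sub]; exact TL_psd A h

lemma iter_psd (A : Q → Matrix (Fin n) (Fin n) ℝ) {X} (hX : X.PosSemidef) (k : ℕ) :
    ((fun Y => TL A Y)^[k] X).PosSemidef := by
  induction k with
  | zero => simpa using hX
  | succ k ih => rw [Function.iterate_succ_apply']; exact TL_psd A ih

lemma iter_mono (A : Q → Matrix (Fin n) (Fin n) ℝ) {X Y : Matrix (Fin n) (Fin n) ℝ}
    (h : (Y - X).PosSemidef) (k : ℕ) :
    ((fun Z => TL A Z)^[k] Y - (fun Z => TL A Z)^[k] X).PosSemidef := by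
  induction k with
  | zero => simpa using h
  | succ k ih =>
    rw [Function.iterate_succ_apply', Function.iterate_succ_apply']
    exact TL_mono A ih

lemma iter_smul (A : Q → Matrix (Fin n) (Fin n) ℝ) (c : ℝ) (X) (k : ℕ) :
    (fun Z => TL A Z)^[k] (c • X) = c • (fun Z => TL A Z)^[k] X := by
  induction k with
  | zero => simp
  | succ k ih =>
    rw [Function.iterate_succ_apply', Function.iterate_succ_apply', ih, _root_.map_smul]

/-! ### Words -/

lemma foldl_eq (A : Q → Matrix (Fin n) (Fin n) ℝ) (w : List Q) (B : Matrix (Fin n) (Fin n) ℝ) :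
    w.foldl (fun M q => A q * M) B = wordProd A w * B := by
  induction w generalizing B with
  | nil => simp [wordProd]
  | cons q w ih =>
    rw [List.foldl_cons, ih]
    show _ = List.foldl _ _ _ * B
    rw [List.foldl_cons, ih]
    simp [mul_assoc]

lemma wordProd_nil (A : Q → Matrix (Fin n) (Fin n) ℝ) : wordProd A [] = 1 := rfl

lemma wordProd_cons (A : Q → Matrix (Fin n) (Fin n) ℝ) (q : Q) (w : List Q) :
    wordProd A (q :: w) = wordProd A w * A q := by
  show List.foldl _ _ _ = _
  rw [List.foldl_cons, foldl_eq]
  simp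

/-- conjugation along a word -/
def Ew (A : Q → Matrix (Fin n) (Fin n) ℝ) (X : Matrix (Fin n) (Fin n) ℝ) (w : List Q) :
    Matrix (Fin n) (Fin n) ℝ :=
  (wordProd A w)ᵀ * X * wordProd A w

lemma Ew_nil (A : Q → Matrix (Fin n) (Fin n) ℝ) (X) : Ew A X [] = X := by
  simp [Ew, wordProd_nil]

lemma Ew_cons (A : Q → Matrix (Fin n) (Fin n) ℝ) (X) (q : Q) (w : List Q) :
    Ew A X (q :: w) = (A q)ᵀ * Ew A X w * A q := by
  simp only [Ew, wordProd_cons, transpose_mul]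
  noncomm_ring

lemma Ew_psd (A : Q → Matrix (Fin n) (Fin n) ℝ) {X} (hX : X.PosSemidef) (w : List Q) :
    (Ew A X w).PosSemidef := psd_conj hX _

def consEquiv (Q : Type*) (k : ℕ) : Q × List.Vector Q k ≃ List.Vector Q (k + 1) where
  toFun p := p.1 ::ᵥ p.2
  invFun v := (v.head, v.tail)
  left_inv p := by simp
  right_inv v := by simp [List.Vector.cons_head_tail]

lemma sum_words (A : Q → Matrix (Fin n) (Fin n) ℝ) (X : Matrix (Fin n) (Fin n) ℝ) :
    ∀ k : ℕ, ∑ v : List.Vector Q k, Ew A X v.toList = (fun Y => TL A Y)^[k] X := by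
  intro k
  induction k with
  | zero =>
    have h1 : ∀ v : List.Vector Q 0, Ew A X v.toList = X := by
      intro v
      have : v.toList = [] := List.length_eq_zero_iff.mp v.2
      rw [this, Ew_nil]
    rw [Finset.sum_congr rfl fun v _ => h1 v]
    rw [Finset.sum_const]
    have : Fintype.card (List.Vector Q 0) = 1 := by
      simp
    simp [Finset.card_univ, this]
  | succ k ih =>
    rw [Function.iterate_succ_apply', ← ih]
    rw [← Fintype.sum_equiv (consEquiv Q k) _ (fun v => Ew A X v.toList) (fun p => rfl)]
    rw [Fintype.sum_prod_type]
    show ∑ q : Q, ∑ w : List.Vector Q k, Ew A X ((q ::ᵥ w).toList) = _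
    simp only [List.Vector.toList_cons, Ew_cons]
    show _ = ∑ q : Q, (A q)ᵀ * (∑ w : List.Vector Q k, Ew A X w.toList) * A q
    refine Finset.sum_congr rfl fun q _ => ?_
    rw [Finset.mul_sum, Finset.sum_mul]

/-- the equivalence between words and the sigma-type of fixed-length words -/
def sigmaEquiv (Q : Type*) : (Σ k : ℕ, List.Vector Q k) ≃ List Q where
  toFun p := p.2.toList
  invFun l := ⟨l.length, ⟨l, rfl⟩⟩
  left_inv := by rintro ⟨k, ⟨l, rfl⟩⟩; rfl
  right_inv l := rfl

/-! ### diagonal / trace / entry bounds for PSD matrices -/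

lemma diag_le {X Y : Matrix (Fin n) (Fin n) ℝ} (h : (Y - X).PosSemidef) (i : Fin n) :
    X i i ≤ Y i i := by
  have := h.dotProduct_mulVec_nonneg (Pi.single i 1)
  simp only [star_trivial] at this
  rw [Matrix.sub_mulVec, dotProduct_sub] at this
  have h1 : ∀ M : Matrix (Fin n) (Fin n) ℝ,
      (Pi.single i 1 : Fin n → ℝ) ⬝ᵥ M *ᵥ Pi.single i 1 = M i i := by
    intro M
    simp [dotProduct, Matrix.mulVec, Pi.single_apply, mul_ite, ite_mul]
  rw [h1, h1] at this
  linarith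

lemma diag_nonneg {X : Matrix (Fin n) (Fin n) ℝ} (hX : X.PosSemidef) (i : Fin n) :
    0 ≤ X i i := by
  have h : (X - 0).PosSemidef := by simpa using hX
  simpa using diag_le h i

lemma trace_mono {X Y : Matrix (Fin n) (Fin n) ℝ} (h : (Y - X).PosSemidef) :
    X.trace ≤ Y.trace := by
  simp only [Matrix.trace, Matrix.diag]
  exact Finset.sum_le_sum fun i _ => diag_le h i

lemma trace_nonneg' {X : Matrix (Fin n) (Fin n) ℝ} (hX : X.PosSemidef) : 0 ≤ X.trace := by
  simp only [Matrix.trace, Matrix.diag]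
  exact Finset.sum_nonneg fun i _ => diag_nonneg hX i

lemma diag_le_trace {X : Matrix (Fin n) (Fin n) ℝ} (hX : X.PosSemidef) (i : Fin n) :
    X i i ≤ X.trace := by
  simp only [Matrix.trace, Matrix.diag]
  exact Finset.single_le_sum (fun j _ => diag_nonneg hX j) (Finset.mem_univ i)

lemma single_quad (M : Matrix (Fin n) (Fin n) ℝ) (i j : Fin n) :
    (Pi.single i 1 : Fin n → ℝ) ⬝ᵥ M *ᵥ (Pi.single j 1 : Fin n → ℝ) = M i j := by
  simp [dotProduct, Matrix.mulVec, Pi.single_apply, mul_ite, ite_mul]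

lemma abs_entry_le_trace {X : Matrix (Fin n) (Fin n) ℝ} (hX : X.PosSemidef) (i j : Fin n) :
    |X i j| ≤ X.trace := by
  have hsym : X j i = X i j := by
    have := hX.1
    have h2 : Xᴴ i j = X i j := by rw [this]
    simpa [Matrix.conjTranspose_apply] using h2
  have h1 := hX.dotProduct_mulVec_nonneg (Pi.single i 1 + Pi.single j 1)
  have h2 := hX.dotProduct_mulVec_nonneg ((Pi.single i 1 : Fin n → ℝ) - Pi.single j 1)
  simp only [star_trivial] at h1 h2
  rw [Matrix.mulVec_add, dotProduct_add, add_dotProduct, add_dotProduct] at h1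
  rw [Matrix.mulVec_sub, dotProduct_sub, sub_dotProduct, sub_dotProduct] at h2
  simp only [single_quad] at h1 h2
  have hii := diag_le_trace hX i
  have hjj := diag_le_trace hX j
  rw [abs_le]
  constructor <;> nlinarith [diag_nonneg hX i, diag_nonneg hX j]

end Stmt10Aux

theorem stmt10 {n : ℕ} {Q : Type*} [Fintype Q]
    (A : Q → Matrix (Fin n) (Fin n) ℝ)
    (P : Matrix (Fin n) (Fin n) ℝ) (hP : P.PosDef)
    (hstab : (P - ∑ q : Q, (A q)ᵀ * P * A q).PosDef)
    (G : Matrix (Fin n) (Fin n) ℝ) (hG : G.PosSemidef) :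
    (∃! P' : Matrix (Fin n) (Fin n) ℝ, P' = (∑ q : Q, (A q)ᵀ * P' * A q) + G) ∧
    (∀ P' : Matrix (Fin n) (Fin n) ℝ,
      P' = (∑ q : Q, (A q)ᵀ * P' * A q) + G →
        P'.PosSemidef ∧
        Summable (fun w : List Q => (wordProd A w)ᵀ * G * wordProd A w) ∧
        P' = ∑' w : List Q, (wordProd A w)ᵀ * G * wordProd A w ∧
        (G.PosDef → P'.PosDef)) := by
  classical
  open Stmt10Aux in
  -- the stability hypothesis in operator form
  have hTP : (P - TL A P).PosDef := by
    simpa [TL_apply] using hstab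
  obtain ⟨c₀, hc₀, hcP⟩ := exists_sub_smul_psd hP hTP
  set c : ℝ := min c₀ 1 with hcdef
  have hc : 0 < c := lt_min hc₀ one_pos
  have hc1 : c ≤ 1 := min_le_right _ _
  set ρ : ℝ := 1 - c with hρdef
  have hρ0 : 0 ≤ ρ := by rw [hρdef]; linarith
  have hρ1 : ρ < 1 := by rw [hρdef]; linarith
  have hρP : (ρ • P - TL A P).PosSemidef := by
    have he : ρ • P - TL A P = ((P - TL A P) - c₀ • P) + (c₀ - c) • P := by
      rw [hρdef]; module
    rw [he]
    exact hcP.add (psd_smul hP.posSemidef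
      (by rw [hcdef]; have := min_le_left c₀ 1; linarith))
  obtain ⟨γ, hγ, hγP⟩ := exists_smul_sub_psd hP hG
  obtain ⟨β, hβ, hβP⟩ := exists_smul_sub_psd hP (Matrix.PosSemidef.one)
  -- iterate bounds
  have iterP : ∀ k : ℕ, (ρ ^ k • P - (fun Y => TL A Y)^[k] P).PosSemidef := by
    intro k
    induction k with
    | zero => simpa using Matrix.PosSemidef.zero
    | succ k ih =>
      have he : ρ ^ (k + 1) • P - (fun Y => TL A Y)^[k + 1] P
          = ρ ^ k • (ρ • P - TL A P)
            + (TL A (ρ ^ k • P) - TL A ((fun Y => TL A Y)^[k] P)) := by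
        rw [Function.iterate_succ_apply', _root_.map_smul, pow_succ]
        module
      rw [he]
      exact (psd_smul hρP (pow_nonneg hρ0 k)).add (TL_mono A ih)
  have iterX : ∀ (γ' : ℝ), 0 ≤ γ' → ∀ (X : Matrix (Fin n) (Fin n) ℝ),
      (γ' • P - X).PosSemidef → ∀ k : ℕ,
      ((γ' * ρ ^ k) • P - (fun Y => TL A Y)^[k] X).PosSemidef := by
    intro γ' hγ' X hX k
    have he : (γ' * ρ ^ k) • P - (fun Y => TL A Y)^[k] X
        = γ' • (ρ ^ k • P - (fun Y => TL A Y)^[k] P)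
          + ((fun Y => TL A Y)^[k] (γ' • P) - (fun Y => TL A Y)^[k] X) := by
      rw [iter_smul]
      module
    rw [he]
    exact (psd_smul (iterP k) hγ').add (iter_mono A hX k)
  -- summability of the traces
  set g : List Q → ℝ := fun w => (Ew A G w).trace with hgdef
  have hg0 : ∀ w, 0 ≤ g w := fun w => trace_nonneg' (Ew_psd A hG w)
  have htraceK : ∀ k : ℕ, ∑ v : List.Vector Q k, g v.toList
      = ((fun Y => TL A Y)^[k] G).trace := by
    intro k
    rw [← sum_words A G k, Matrix.trace_sum]
  have hboundK : ∀ k : ℕ, ((fun Y => TL A Y)^[k] G).trace ≤ (γ * P.trace) * ρ ^ k := by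
    intro k
    have h1 := trace_mono (iterX γ hγ.le G hγP k)
    rw [Matrix.trace_smul] at h1
    calc ((fun Y => TL A Y)^[k] G).trace ≤ (γ * ρ ^ k) • P.trace := h1
      _ = (γ * P.trace) * ρ ^ k := by simp [smul_eq_mul]; ring
  have hsummable_g : Summable g := by
    rw [← (sigmaEquiv Q).summable_iff]
    have h0 : ∀ p : Σ k : ℕ, List.Vector Q k, 0 ≤ (g ∘ sigmaEquiv Q) p :=
      fun p => hg0 _
    rw [summable_sigma_of_nonneg h0]
    constructor
    · exact fun k => (hasSum_fintype _).summable
    · have hrw : (fun k : ℕ => ∑' v : List.Vector Q k, (g ∘ sigmaEquiv Q) ⟨k, v⟩)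
          = fun k : ℕ => ((fun Y => TL A Y)^[k] G).trace := by
        funext k
        rw [tsum_fintype]
        exact htraceK k
      rw [hrw]
      refine Summable.of_nonneg_of_le
        (fun k => trace_nonneg' (iter_psd A hG k))
        (fun k => hboundK k)
        ((summable_geometric_of_lt_one hρ0 hρ1).mul_left _)
  -- summability of the series of matrices
  have habs : ∀ (w : List Q) (i j : Fin n), |Ew A G w i j| ≤ g w :=
    fun w i j => abs_entry_le_trace (Ew_psd A hG w) i j
  have hsummableF : Summable (fun w : List Q => Ew A G w) := by
    apply Pi.summable.mpr; intro i
    apply Pi.summable.mpr; intro j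
    refine Summable.of_abs ?_
    exact Summable.of_nonneg_of_le (fun w => abs_nonneg _) (fun w => habs w i j) hsummable_g
  set S : Matrix (Fin n) (Fin n) ℝ := ∑' w : List Q, Ew A G w with hSdef
  have hS : HasSum (fun w : List Q => Ew A G w) S := hsummableF.hasSum
  -- the sum, grouped by word length
  have hk : HasSum (fun k : ℕ => (fun Y => TL A Y)^[k] G) S := by
    have h1 : HasSum ((fun w : List Q => Ew A G w) ∘ sigmaEquiv Q) S :=
      ((sigmaEquiv Q).hasSum_iff).mpr hS
    refine h1.sigma fun k => ?_
    have h2 := hasSum_fintype fun v : List.Vector Q k => Ew A G v.toList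
    rw [sum_words A G k] at h2
    exact h2
  set U : ℕ → Matrix (Fin n) (Fin n) ℝ := fun N => ∑ k ∈ Finset.range N, (fun Y => TL A Y)^[k] G
    with hUdef
  have hU : Filter.Tendsto U Filter.atTop (nhds S) := hk.tendsto_sum_nat
  have hUpsd : ∀ N, (U N).PosSemidef :=
    fun N => posSemidef_sum _ _ fun k _ => iter_psd A hG k
  have hrecur : ∀ N, U (N + 1) = TL A (U N) + G := by
    intro N
    rw [hUdef]
    simp only
    rw [Finset.sum_range_succ']
    simp only [Function.iterate_succ_apply', Function.iterate_zero_apply]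
    rw [← map_sum]
  have hTcont : Continuous (TL A) := LinearMap.continuous_of_finiteDimensional _
  have hfix : S = TL A S + G := by
    have h1 : Filter.Tendsto (fun N => U (N + 1)) Filter.atTop (nhds S) :=
      hU.comp (Filter.tendsto_add_atTop_nat 1)
    have h2 : Filter.Tendsto (fun N => TL A (U N) + G) Filter.atTop (nhds (TL A S + G)) :=
      (((hTcont.tendsto S).comp hU).add tendsto_const_nhds)
    have h3 : (fun N => U (N + 1)) = fun N => TL A (U N) + G := funext hrecur
    rw [h3] at h1
    exact tendsto_nhds_unique h1 h2
  -- S is positive semidefinite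
  have hSpsd : S.PosSemidef := by
    refine Matrix.PosSemidef.of_dotProduct_mulVec_nonneg ?_ ?_
    · have hconj : Filter.Tendsto (fun N => (U N)ᴴ) Filter.atTop (nhds Sᴴ) :=
        (continuous_id.matrix_conjTranspose.tendsto S).comp hU
      have h3 : (fun N => (U N)ᴴ) = U := funext fun N => (hUpsd N).1
      rw [h3] at hconj
      exact tendsto_nhds_unique hconj hU
    · intro x
      have hcont : Continuous fun M : Matrix (Fin n) (Fin n) ℝ => star x ⬝ᵥ M *ᵥ x :=
        continuous_const.dotProduct (continuous_id.matrix_mulVec continuous_const)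
      have h1 : Filter.Tendsto (fun N => star x ⬝ᵥ (U N) *ᵥ x) Filter.atTop
          (nhds (star x ⬝ᵥ S *ᵥ x)) := (hcont.tendsto S).comp hU
      exact ge_of_tendsto' h1 fun N => (hUpsd N).dotProduct_mulVec_nonneg x
  -- the statement's operator written via TL
  have hTL : ∀ X : Matrix (Fin n) (Fin n) ℝ, (∑ q : Q, (A q)ᵀ * X * A q) = TL A X :=
    fun X => rfl
  have hskey : S = (∑ q : Q, (A q)ᵀ * S * A q) + G := by rw [hTL]; exact hfix
  -- uniqueness
  have huniq : ∀ y : Matrix (Fin n) (Fin n) ℝ,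
      y = (∑ q : Q, (A q)ᵀ * y * A q) + G → y = S := by
    intro y hy
    rw [hTL] at hy
    set D : Matrix (Fin n) (Fin n) ℝ := y - S with hDdef
    have hD : D = TL A D := by
      rw [hDdef, map_sub]
      conv_lhs => rw [hy, hfix]
      abel
    have hDk : ∀ k : ℕ, D = (fun Y => TL A Y)^[k] D := by
      intro k
      induction k with
      | zero => simp
      | succ k ih =>
        rw [Function.iterate_succ_apply', ← ih, ← hD]
    set CD : ℝ := ∑ b : Fin n, ∑ a : Fin n, |D a b| with hCDdef
    have hCD0 : 0 ≤ CD :=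
      Finset.sum_nonneg fun b _ => Finset.sum_nonneg fun a _ => abs_nonneg _
    -- bound on the entries of iterates
    have hIbound : ∀ (k : ℕ) (i : Fin n), ((fun Y => TL A Y)^[k] (1 : Matrix (Fin n) (Fin n) ℝ)) i i
        ≤ (β * ρ ^ k) * P.trace := by
      intro k i
      have h1 := diag_le (iterX β hβ.le 1 hβP k) i
      have h2 : ((β * ρ ^ k) • P) i i = (β * ρ ^ k) * P i i := rfl
      have h3 : P i i ≤ P.trace := diag_le_trace hP.posSemidef i
      have h4 : 0 ≤ β * ρ ^ k := mul_nonneg hβ.le (pow_nonneg hρ0 k)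
      calc ((fun Y => TL A Y)^[k] (1 : Matrix (Fin n) (Fin n) ℝ)) i i
          ≤ (β * ρ ^ k) * P i i := by rw [← h2]; exact h1
        _ ≤ (β * ρ ^ k) * P.trace := mul_le_mul_of_nonneg_left h3 h4
    have hEbound : ∀ (k : ℕ) (i j : Fin n),
        |((fun Y => TL A Y)^[k] D) i j| ≤ (CD * β * P.trace) * ρ ^ k := by
      intro k i j
      rw [← sum_words A D k]
      have hsumapp : (∑ v : List.Vector Q k, Ew A D v.toList) i j
          = ∑ v : List.Vector Q k, Ew A D v.toList i j := by
        rw [Matrix.sum_apply]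
      rw [hsumapp]
      have hterm : ∀ v : List.Vector Q k,
          |Ew A D v.toList i j| ≤ CD *
            ((Ew A 1 v.toList i i + Ew A 1 v.toList j j) / 2) := by
        intro v
        set B := wordProd A v.toList with hB
        have hE1 : Ew A (1 : Matrix (Fin n) (Fin n) ℝ) v.toList = Bᵀ * B := by
          rw [Ew, Matrix.mul_one]
        have hEw1ii : Ew A (1 : Matrix (Fin n) (Fin n) ℝ) v.toList i i = ∑ a, B a i * B a i := by
          rw [hE1, Matrix.mul_apply]
          simp [Matrix.transpose_apply]
        have hEw1jj : Ew A (1 : Matrix (Fin n) (Fin n) ℝ) v.toList j j = ∑ b, B b j * B b j := by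
          rw [hE1, Matrix.mul_apply]
          simp [Matrix.transpose_apply]
        have hBsq : ∀ a : Fin n, B a i * B a i ≤ ∑ a', B a' i * B a' i :=
          fun a => Finset.single_le_sum (f := fun a' => B a' i * B a' i)
            (fun a' _ => mul_self_nonneg _) (Finset.mem_univ a)
        have hBsq' : ∀ b : Fin n, B b j * B b j ≤ ∑ b', B b' j * B b' j :=
          fun b => Finset.single_le_sum (f := fun b' => B b' j * B b' j)
            (fun b' _ => mul_self_nonneg _) (Finset.mem_univ b)
        have hED : Ew A D v.toList = Bᵀ * D * B := rfl
        have hEwapp : Ew A D v.toList i j = ∑ b, (∑ a, B a i * D a b) * B b j := by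
          rw [hED, Matrix.mul_apply]
          refine Finset.sum_congr rfl fun b _ => ?_
          rw [Matrix.mul_apply]
          simp [Matrix.transpose_apply]
        rw [hEwapp, hEw1ii, hEw1jj]
        set d : ℝ := ((∑ a, B a i * B a i) + (∑ b, B b j * B b j)) / 2 with hd
        calc |∑ b, (∑ a, B a i * D a b) * B b j|
            ≤ ∑ b, |(∑ a, B a i * D a b) * B b j| := Finset.abs_sum_le_sum_abs _ _
          _ ≤ ∑ b, ∑ a, |D a b| * d := by
              refine Finset.sum_le_sum fun b _ => ?_
              rw [abs_mul]
              calc |∑ a, B a i * D a b| * |B b j|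
                  ≤ (∑ a, |B a i * D a b|) * |B b j| := by
                    apply mul_le_mul_of_nonneg_right (Finset.abs_sum_le_sum_abs _ _)
                      (abs_nonneg _)
                _ = ∑ a, |B a i * D a b| * |B b j| := by rw [Finset.sum_mul]
                _ ≤ ∑ a, |D a b| * d := by
                    refine Finset.sum_le_sum fun a _ => ?_
                    rw [abs_mul]
                    have h5 : |B a i| * |B b j| ≤ d := by
                      have h6 : 2 * |B a i| * |B b j| ≤ |B a i| ^ 2 + |B b j| ^ 2 :=
                        two_mul_le_add_sq _ _
                      have h7 : |B a i| ^ 2 = B a i * B a i := by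
                        rw [sq_abs]; ring
                      have h8 : |B b j| ^ 2 = B b j * B b j := by
                        rw [sq_abs]; ring
                      rw [h7, h8] at h6
                      rw [hd]
                      nlinarith [hBsq a, hBsq' b]
                    calc |B a i| * |D a b| * |B b j|
                        = |D a b| * (|B a i| * |B b j|) := by ring
                      _ ≤ |D a b| * d := by
                          apply mul_le_mul_of_nonneg_left h5 (abs_nonneg _)
          _ = (∑ b, ∑ a, |D a b|) * d := by
              rw [Finset.sum_mul]
              refine Finset.sum_congr rfl fun b _ => ?_
              rw [Finset.sum_mul]
          _ = CD * d := by rw [hCDdef]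
      calc |∑ v : List.Vector Q k, Ew A D v.toList i j|
          ≤ ∑ v : List.Vector Q k, |Ew A D v.toList i j| := Finset.abs_sum_le_sum_abs _ _
        _ ≤ ∑ v : List.Vector Q k, CD *
              ((Ew A 1 v.toList i i + Ew A 1 v.toList j j) / 2) :=
            Finset.sum_le_sum fun v _ => hterm v
        _ = CD * ((((fun Y => TL A Y)^[k] (1 : Matrix (Fin n) (Fin n) ℝ)) i i
              + ((fun Y => TL A Y)^[k] (1 : Matrix (Fin n) (Fin n) ℝ)) j j) / 2) := by
            rw [← Finset.mul_sum]
            congr 1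
            rw [← sum_words A 1 k, Matrix.sum_apply,
              Matrix.sum_apply, ← Finset.sum_div, ← Finset.sum_add_distrib]
        _ ≤ CD * ((β * ρ ^ k) * P.trace) := by
            apply mul_le_mul_of_nonneg_left _ hCD0
            have := hIbound k i
            have := hIbound k j
            linarith
        _ = (CD * β * P.trace) * ρ ^ k := by ring
    have hDij : ∀ i j, D i j = 0 := by
      intro i j
      have h1 : ∀ k : ℕ, |D i j| ≤ (CD * β * P.trace) * ρ ^ k := by
        intro k
        calc |D i j| = |((fun Y => TL A Y)^[k] D) i j| := by rw [← hDk k]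
          _ ≤ (CD * β * P.trace) * ρ ^ k := hEbound k i j
      have h2 : Filter.Tendsto (fun k : ℕ => (CD * β * P.trace) * ρ ^ k) Filter.atTop
          (nhds 0) := by
        rw [show (0 : ℝ) = (CD * β * P.trace) * 0 by ring]
        exact (tendsto_pow_atTop_nhds_zero_of_lt_one hρ0 hρ1).const_mul _
      have h3 : |D i j| ≤ 0 := ge_of_tendsto' h2 h1
      exact abs_eq_zero.mp (le_antisymm h3 (abs_nonneg _))
    have hD0 : D = 0 := by
      ext i j
      exact hDij i j
    rw [hDdef, sub_eq_zero] at hD0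
    exact hD0
  -- assemble the final statement
  have hEwF : (fun w : List Q => (wordProd A w)ᵀ * G * wordProd A w)
      = fun w : List Q => Ew A G w := rfl
  refine ⟨⟨S, hskey, fun y hy => huniq y hy⟩, fun P' hP' => ?_⟩
  have hPS : P' = S := huniq P' hP'
  subst hPS
  refine ⟨hSpsd, by rw [hEwF]; exact hsummableF, by rw [hEwF], fun hGpd => ?_⟩
  refine Matrix.PosDef.of_dotProduct_mulVec_pos hSpsd.1 fun x hx => ?_
  have h1 : star x ⬝ᵥ S *ᵥ x
      = star x ⬝ᵥ (TL A S) *ᵥ x + star x ⬝ᵥ G *ᵥ x := by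
    conv_lhs => rw [hfix]
    rw [Matrix.add_mulVec, dotProduct_add]
  rw [h1]
  exact add_pos_of_nonneg_of_pos ((TL_psd A hSpsd).dotProduct_mulVec_nonneg x) (hGpd.dotProduct_mulVec_pos hx)
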